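/- For λ ∈ ℂ∖{0}, let μ^λ be the superalgebra structure tensor of type (2,3) with, in the standard homogeneous basis {e₁, e₂; f₁, f₂, f₃} of ℂ² ⊕ ℂ³, nonzero products e₁² = e₂, e₁f₂ = f₂e₁ = f₁, f₁f₃ = −f₃f₁ = λe₂, f₂f₃ = −f₃f₂ = e₁ (all other products of basis vectors zero), and let ν be the tensor with nonzero products e₁f₂ = f₂e₁ = f₁, f₁f₃ = −f₃f₁ = e₂, f₂f₃ = −f₃f₂ = e₁. Then ν lies in the closure, in the standard topology on the space of structure tensors of type (2,3), of the union over λ ∈ ℂ∖{0} of the G-orbits of μ^λ, where G = GL₂(ℂ) × GL₃(ℂ) acts by base change. (In the paper's notation: (2,3)₃₁^λ degenerates to (2,3)₁₀.) -/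
import Mathlib


noncomputable section

/-- The underlying ℤ/2-graded vector space of type `(m,n)`: even part `Fin m → ℂ`,
odd part `Fin n → ℂ`. -/
abbrev GV (m n : ℕ) : Type := (Fin m → ℂ) × (Fin n → ℂ)

/-- A superalgebra structure tensor of type `(m,n)`: structure constants
`c i j k` (even·even), `ρ i j k` (even·odd) and `Γ i j k` (odd·odd). -/
abbrev Tensor (m n : ℕ) : Type :=
  (Fin m → Fin m → Fin m → ℂ) × (Fin m → Fin n → Fin n → ℂ) × (Fin n → Fin n → Fin m → ℂ)

/-- The ℤ/2-graded multiplication on `GV m n` determined by a structure tensor. -/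
def mulOf {m n : ℕ} (μ : Tensor m n) (x y : GV m n) : GV m n :=
  (fun k => (∑ i, ∑ j, x.1 i * y.1 j * μ.1 i j k) + ∑ i, ∑ j, x.2 i * y.2 j * μ.2.2 i j k,
   fun k => (∑ i, ∑ j, x.1 i * y.2 j * μ.2.1 i j k) + ∑ i, ∑ j, y.1 i * x.2 j * μ.2.1 i j k)

/-- `x` is homogeneous of parity `p` (`p = 0`: even, `p = 1`: odd). -/
def IsHom {m n : ℕ} (p : ℕ) (x : GV m n) : Prop :=
  (p = 0 ∧ x.2 = 0) ∨ (p = 1 ∧ x.1 = 0)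

/-- The sign `(-1)^k`. -/
def sgn (k : ℕ) : ℂ := (-1 : ℂ) ^ k

/-- The super-Jordan expression `J^s(w; x, y, z)` for homogeneous elements of
parities `pw, px, py, pz`. -/
def superJ {m n : ℕ} (μ : Tensor m n) (pw px py pz : ℕ) (w x y z : GV m n) : GV m n :=
  mulOf μ (mulOf μ w x) (mulOf μ y z)
    + sgn (px * py) • mulOf μ (mulOf μ w y) (mulOf μ x z)
    + sgn ((px + py) * pz) • mulOf μ (mulOf μ w z) (mulOf μ x y)
    - sgn (pw * px) • mulOf μ x (mulOf μ w (mulOf μ y z))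
    - sgn (py * (pw + px)) • mulOf μ y (mulOf μ w (mulOf μ x z))
    - sgn (pz * (pw + px + py)) • mulOf μ z (mulOf μ w (mulOf μ x y))

/-- `μ` is a Jordan superalgebra structure: supercommutativity and the Jordan
superidentity hold for all homogeneous elements. -/
def IsJordanSuper {m n : ℕ} (μ : Tensor m n) : Prop :=
  (∀ (px py : ℕ) (x y : GV m n), IsHom px x → IsHom py y →
      mulOf μ x y = sgn (px * py) • mulOf μ y x) ∧
  (∀ (pw px py pz : ℕ) (w x y z : GV m n),
      IsHom pw w → IsHom px x → IsHom py y → IsHom pz z →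
      superJ μ pw px py pz w x y z = 0)

/-- The product of two graded subspaces: the span of all products. -/
def mulSub {m n : ℕ} (μ : Tensor m n) (A B : Submodule ℂ (GV m n)) : Submodule ℂ (GV m n) :=
  Submodule.span ℂ {z | ∃ a ∈ A, ∃ b ∈ B, z = mulOf μ a b}

/-- The powers `J^k`: `J^1 = J` and `J^{k+1} = Σ_{i=1}^{k} J^i · J^{k+1-i}`. -/
def powT {m n : ℕ} (μ : Tensor m n) : ℕ → Submodule ℂ (GV m n)
  | 0 => ⊤
  | 1 => ⊤
  | (k + 2) => ⨆ i : Fin (k + 1), mulSub μ (powT μ ((i : ℕ) + 1)) (powT μ (k + 1 - (i : ℕ)))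
  decreasing_by
  · have := i.isLt; omega
  · omega

/-- `μ` is nilpotent: some power vanishes. -/
def IsNilpotentT {m n : ℕ} (μ : Tensor m n) : Prop :=
  ∃ k : ℕ, 1 ≤ k ∧ powT μ k = ⊥

/-- A grading-preserving algebra isomorphism between the superalgebras determined
by `μ` and `μ'`. -/
def Iso {m n : ℕ} (μ μ' : Tensor m n) : Prop :=
  ∃ (T : (Fin m → ℂ) ≃ₗ[ℂ] (Fin m → ℂ)) (S : (Fin n → ℂ) ≃ₗ[ℂ] (Fin n → ℂ)),
    ∀ x y : GV m n,
      (T ((mulOf μ x y).1), S ((mulOf μ x y).2)) = mulOf μ' (T x.1, S x.2) (T y.1, S y.2)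

/-- `μ` degenerates to `μ'`: `μ'` lies in the closure of the orbit of `μ` under
base change (in the standard topology). -/
def degenerates {m n : ℕ} (μ μ' : Tensor m n) : Prop :=
  μ' ∈ closure {ν : Tensor m n | Iso μ ν}

/-- Standard even basis vector `e_i`. -/
def eps {m n : ℕ} (i : Fin m) : GV m n := (Pi.single i 1, 0)

/-- Standard odd basis vector `f_j`. -/
def ph {m n : ℕ} (j : Fin n) : GV m n := (0, Pi.single j 1)


/-- A tensor of type (2,3) with products `e₁² = a·e₂`, `e₁f_j = Σ_k R1 j k f_k`,
`e₂f_j = Σ_k R2 j k f_k` and `f_if_j = W i j · e₁ + Θ i j · e₂`. -/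
def T23 (a : ℂ) (R1 R2 W Θ : Fin 3 → Fin 3 → ℂ) : Tensor 2 3 :=
  (fun i j k => if i = 0 ∧ j = 0 ∧ k = 1 then a else 0,
   fun i => if i = 0 then R1 else R2,
   fun i j k => if k = 0 then W i j else Θ i j)

/-- `e·f₂ = f₁`. -/
def P21 : Fin 3 → Fin 3 → ℂ := ![![0,0,0], ![1,0,0], ![0,0,0]]
/-- `e·f₃ = f₂`. -/
def P32 : Fin 3 → Fin 3 → ℂ := ![![0,0,0], ![0,0,0], ![0,1,0]]
/-- `e·f₃ = f₁`. -/
def P31 : Fin 3 → Fin 3 → ℂ := ![![0,0,0], ![0,0,0], ![1,0,0]]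
/-- `e·f₂ = f₃`. -/
def P23 : Fin 3 → Fin 3 → ℂ := ![![0,0,0], ![0,0,1], ![0,0,0]]
/-- `f₁f₂ = e`. -/
def W12 : Fin 3 → Fin 3 → ℂ := ![![0,1,0], ![-1,0,0], ![0,0,0]]
/-- `f₁f₃ = e`. -/
def W13 : Fin 3 → Fin 3 → ℂ := ![![0,0,1], ![0,0,0], ![-1,0,0]]
/-- `f₂f₃ = e`. -/
def W23 : Fin 3 → Fin 3 → ℂ := ![![0,0,0], ![0,0,1], ![0,-1,0]]

/-- The family `(2,3)₃₁^λ`: `e₁² = e₂`, `e₁f₂ = f₁`, `f₁f₃ = λe₂`, `f₂f₃ = e₁`. -/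
def A31 (l : ℂ) : Tensor 2 3 := T23 1 P21 0 W23 (l • W13)

/-- The family `(2,3)₄₃^γ`: `e₁² = e₂`, `e₁f₂ = f₃`, `e₁f₃ = γf₁`, `e₂f₂ = f₁`. -/
def A43 (g : ℂ) : Tensor 2 3 := T23 1 (P23 + g • P31) P21 0 0

/-- The family `(2,3)₄₄^φ`: `e₁² = e₂`, `e₁f₂ = f₃`, `e₁f₃ = φf₁`, `e₂f₂ = f₁`,
`f₂f₃ = e₂`. -/
def A44 (p : ℂ) : Tensor 2 3 := T23 1 (P23 + p • P31) P21 0 W23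

/-- The superalgebra `(2,3)₁₀`: `e₁f₂ = f₁`, `f₁f₃ = e₂`, `f₂f₃ = e₁`. -/
def A10 : Tensor 2 3 := T23 0 P21 0 W23 W13


/-- Curve of tensors: `e₁² = t·e₂`, `e₁f₂ = f₁`, `f₁f₃ = e₂`, `f₂f₃ = e₁`. -/
def nuC (t : ℂ) : Tensor 2 3 := T23 t P21 0 W23 W13

def Tdiag (t : ℂ) (ht : t ≠ 0) : (Fin 2 → ℂ) ≃ₗ[ℂ] (Fin 2 → ℂ) :=
  LinearEquiv.piCongrRight fun i =>
    LinearEquiv.smulOfNeZero ℂ ℂ (if i = 1 then t else 1)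
      (by split <;> simp [ht])

lemma isoNu (t : ℂ) (ht : t ≠ 0) : Iso (A31 t⁻¹) (nuC t) := by
  refine ⟨Tdiag t ht, LinearEquiv.refl ℂ _, fun x y => ?_⟩
  have hT : ∀ (v : Fin 2 → ℂ) (i : Fin 2),
      Tdiag t ht v i = (if i = 1 then t else 1) * v i := by
    intro v i
    rcases eq_or_ne i 1 with h | h <;>
      simp [Tdiag, LinearEquiv.smulOfNeZero, LinearEquiv.smulOfUnit,
        DistribMulAction.toLinearEquiv, Units.smul_def, smul_eq_mul, h]
  refine Prod.ext ?_ ?_ <;> funext k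
  · rw [show ((mulOf (nuC t) ((Tdiag t ht) x.1, (LinearEquiv.refl ℂ _) x.2)
        ((Tdiag t ht) y.1, (LinearEquiv.refl ℂ _) y.2)).1 k =
        (mulOf (nuC t) ((Tdiag t ht) x.1, x.2) ((Tdiag t ht) y.1, y.2)).1 k) from rfl]
    simp only [mulOf, hT, A31, nuC, T23, Fin.sum_univ_succ, Fin.sum_univ_zero]
    fin_cases k <;>
      simp [P21, W23, W13, Fin.sum_univ_succ, Matrix.vecHead, Matrix.vecTail] <;>
      field_simp <;> ring
  · simp only [mulOf, hT, A31, nuC, T23, Fin.sum_univ_succ, Fin.sum_univ_zero,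
      LinearEquiv.refl_apply]
    fin_cases k <;>
      simp [P21, W23, W13, Fin.sum_univ_succ, Matrix.vecHead, Matrix.vecTail] <;>
      field_simp <;> ring

/-- the family `(2,3)₃₁^λ` degenerates to `(2,3)₁₀`: the latter lies in
the closure of the union of the orbits of the former. -/
theorem stmt18 :
    A10 ∈ closure {ρ : Tensor 2 3 | ∃ l : ℂ, l ≠ 0 ∧ Iso (A31 l) ρ} := by
  have hcont : Continuous fun t : ℂ => nuC t := by
    unfold nuC T23
    refine Continuous.prodMk ?_ continuous_const
    refine continuous_pi fun i => continuous_pi fun j => continuous_pi fun k => ?_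
    by_cases h : i = 0 ∧ j = 0 ∧ k = 1 <;> simp only [h, if_true, if_false] <;>
      first | exact continuous_id | exact continuous_const
  have h0 : nuC 0 = A10 := rfl
  have hseq : Filter.Tendsto (fun n : ℕ => (((n : ℂ) + 1)⁻¹)) Filter.atTop (nhds 0) := by
    have h1 : Filter.Tendsto (fun n : ℕ => ((1 : ℝ) / (n + 1) : ℝ)) Filter.atTop (nhds 0) :=
      tendsto_one_div_add_atTop_nhds_zero_nat
    have h2 := (Complex.continuous_ofReal.tendsto 0).comp h1
    simpa [Function.comp_def, one_div] using h2
  have htend : Filter.Tendsto (fun n : ℕ => nuC (((n : ℂ) + 1)⁻¹)) Filter.atTop (nhds A10) := by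
    rw [← h0]
    exact (hcont.tendsto 0).comp hseq
  refine mem_closure_of_tendsto htend ?_
  filter_upwards with n
  have ht : (((n : ℂ) + 1)⁻¹) ≠ 0 := inv_ne_zero (Nat.cast_add_one_ne_zero n)
  exact ⟨(((n : ℂ) + 1)⁻¹)⁻¹, inv_ne_zero ht, isoNu _ ht⟩

end
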